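/- Validity of the underrepresentation P-value: let U be a finite set with |U| = N, let A ⊆ U with |A| = K, let σ ∈ (0,1], and let S be a uniformly random m-element subset of U. If K ≥ ⌈σ·N⌉ (i.e., candidate A meets the selectivity threshold), then for every observed count j, P(|S ∩ A| ≤ j) ≤ Σ_{l=0}^{j} C(⌈σN⌉, l)·C(N − ⌈σN⌉, m − l)/C(N, m). Hence, rejecting the null hypothesis 'K ≥ ⌈σN⌉' whenever this sum is at most δ_i yields a test whose probability of falsely rejecting is at most δ_i. -/

import Mathlib

open Finset

private lemma vand (a b m : ℕ) :
    ∑ l ∈ range (m + 1), a.choose l * b.choose (m - l) = (a + b).choose m := by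
  rw [Nat.add_choose_eq, Finset.Nat.sum_antidiagonal_eq_sum_range_succ_mk]

private lemma tail_identity (k n' : ℕ) : ∀ m j : ℕ, j < m →
    ∑ l ∈ range (j + 1), k.choose l * (n' + 1).choose (m - l)
      = (∑ l ∈ range (j + 1), (k + 1).choose l * n'.choose (m - l))
        + k.choose j * n'.choose (m - 1 - j) := by
  intro m j
  induction j with
  | zero =>
      intro hj
      obtain ⟨t, rfl⟩ : ∃ t, m = t + 1 := ⟨m - 1, by omega⟩
      simp [Nat.choose_succ_succ, Nat.add_comm]
  | succ j ih =>
      intro hj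
      rw [sum_range_succ, sum_range_succ ((fun l => (k + 1).choose l * n'.choose (m - l))),
        ih (by omega)]
      obtain ⟨t, rfl⟩ : ∃ t, m = j + 2 + t := ⟨m - j - 2, by omega⟩
      rw [show j + 2 + t - 1 - j = t + 1 from by omega,
        show j + 2 + t - (j + 1) = t + 1 from by omega,
        show j + 2 + t - 1 - (j + 1) = t from by omega,
        Nat.choose_succ_succ n' t, Nat.choose_succ_succ k j]
      ring

private lemma tail_mono_step (N m k j : ℕ) (hk : k < N) (hj : j ≤ m) :
    ∑ l ∈ range (j + 1), (k + 1).choose l * (N - (k + 1)).choose (m - l)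
      ≤ ∑ l ∈ range (j + 1), k.choose l * (N - k).choose (m - l) := by
  have hn : N - k = (N - (k + 1)) + 1 := by omega
  rw [hn]
  rcases lt_or_eq_of_le hj with h | rfl
  · rw [tail_identity k (N - (k + 1)) m j h]
    exact Nat.le_add_right _ _
  · rw [vand, vand, show k + 1 + (N - (k + 1)) = N from by omega,
      show k + (N - (k + 1) + 1) = N from by omega]

private lemma tail_mono (N m j K' : ℕ) (hj : j ≤ m) :
    ∀ K, K' ≤ K → K ≤ N →
      ∑ l ∈ range (j + 1), K.choose l * (N - K).choose (m - l)
        ≤ ∑ l ∈ range (j + 1), K'.choose l * (N - K').choose (m - l) := by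
  intro K hK
  induction K, hK using Nat.le_induction with
  | base => intro _; exact le_refl _
  | succ k hk ih =>
      intro hkN
      exact (tail_mono_step N m k j (by omega) hj).trans (ih (by omega))

private lemma fiber_card_le {α : Type*} [DecidableEq α] (U A : Finset α) (hAU : A ⊆ U)
    (m l : ℕ) :
    ((U.powersetCard m).filter (fun S => (S ∩ A).card = l)).card
      ≤ A.card.choose l * (U.card - A.card).choose (m - l) := by
  have hcard : A.card.choose l * (U.card - A.card).choose (m - l)
      = ((A.powersetCard l) ×ˢ ((U \ A).powersetCard (m - l))).card := by
    rw [card_product, card_powersetCard, card_powersetCard, card_sdiff_of_subset hAU]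
  rw [hcard]
  apply Finset.card_le_card_of_injOn (fun S => (S ∩ A, S \ A))
  · intro S hS
    simp only [mem_coe, mem_filter, mem_powersetCard] at hS
    obtain ⟨⟨hSU, hScard⟩, hl⟩ := hS
    have hsd := Finset.card_inter_add_card_sdiff S A
    simp only [mem_coe, mem_product, mem_powersetCard]
    exact ⟨⟨inter_subset_right, hl⟩, sdiff_subset_sdiff hSU (Finset.Subset.refl A),
      by omega⟩
  · intro S hS T hT h
    have h1 : S ∩ A = T ∩ A := congrArg Prod.fst h
    have h2 : S \ A = T \ A := congrArg Prod.snd h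
    calc S = S \ A ∪ S ∩ A := (sdiff_union_inter S A).symm
      _ = T \ A ∪ T ∩ A := by rw [h1, h2]
      _ = T := sdiff_union_inter T A

private lemma count_le {α : Type*} [DecidableEq α] (U A : Finset α) (hAU : A ⊆ U)
    (m j : ℕ) :
    ((U.powersetCard m).filter (fun S => (S ∩ A).card ≤ j)).card
      ≤ ∑ l ∈ range (j + 1), A.card.choose l * (U.card - A.card).choose (m - l) := by
  rw [card_eq_sum_card_fiberwise (f := fun S => (S ∩ A).card) (t := range (j + 1))
    (fun S hS => by simp only [mem_coe, mem_filter] at hS; exact mem_range.mpr (Nat.lt_succ_of_le hS.2))]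
  refine Finset.sum_le_sum fun l _ => ?_
  refine le_trans (Finset.card_le_card ?_) (fiber_card_le U A hAU m l)
  intro x hx
  simp only [mem_filter] at hx ⊢
  exact ⟨hx.1.1, hx.2⟩

/-- **validity of the underrepresentation P-value.** Let `U` be a finite set
with `|U| = N`, `A ⊆ U` with `|A| = K`, `σ ∈ (0,1]`, and let `S` be a uniformly random
`m`-element subset of `U`. If `K ≥ ⌈σ·N⌉` (the candidate meets the selectivity threshold),
then for every observed count `j`,
`P(|S ∩ A| ≤ j) ≤ ∑_{l=0}^{j} C(⌈σN⌉, l) * C(N - ⌈σN⌉, m - l) / C(N, m)`;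
hence rejecting the null hypothesis `K ≥ ⌈σN⌉` whenever this lower-tail sum (evaluated at the
observed count) is at most `δi` gives a test whose probability of falsely rejecting
is at most `δi`. -/
theorem underrepresentation_pvalue_valid {α : Type*} [DecidableEq α]
    (U A : Finset α) (hAU : A ⊆ U)
    (N K m : ℕ) (hN : U.card = N) (hK : A.card = K) (hm : m ≤ N)
    (σ : ℝ) (hσ0 : 0 < σ) (hσ1 : σ ≤ 1)
    (hsel : ⌈σ * (N : ℝ)⌉₊ ≤ K)
    (hne : (U.powersetCard m).Nonempty) :
    (∀ j : ℕ,
      ((PMF.uniformOfFinset (U.powersetCard m) hne).toOuterMeasure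
          {S | (S ∩ A).card ≤ j}).toReal
        ≤ ∑ l ∈ Finset.range (j + 1),
            ((⌈σ * (N : ℝ)⌉₊.choose l * (N - ⌈σ * (N : ℝ)⌉₊).choose (m - l) : ℝ)
              / (N.choose m)))
    ∧ ∀ δi : ℝ, 0 ≤ δi →
      ((PMF.uniformOfFinset (U.powersetCard m) hne).toOuterMeasure
          {S | (∑ l ∈ Finset.range ((S ∩ A).card + 1),
            ((⌈σ * (N : ℝ)⌉₊.choose l * (N - ⌈σ * (N : ℝ)⌉₊).choose (m - l) : ℝ)
              / (N.choose m))) ≤ δi}).toReal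
        ≤ δi := by
  classical
  set K' : ℕ := ⌈σ * (N : ℝ)⌉₊ with hK'
  set s : Finset (Finset α) := U.powersetCard m with hs
  have hsc : s.card = N.choose m := by rw [hs, card_powersetCard, hN]
  have hCpos : 0 < N.choose m := Nat.choose_pos hm
  have hCR : (0 : ℝ) < (N.choose m : ℝ) := by exact_mod_cast hCpos
  have hKN : K ≤ N := by rw [← hN, ← hK]; exact Finset.card_le_card hAU
  have hmeas : ∀ (p : Finset α → Prop) [DecidablePred p],
      ((PMF.uniformOfFinset s hne).toOuterMeasure {S | p S}).toReal
        = ((s.filter p).card : ℝ) / (N.choose m) := by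
    intro p hp
    rw [PMF.toOuterMeasure_uniformOfFinset_apply, ENNReal.toReal_div, hsc]
    simp only [ENNReal.toReal_natCast]
    exact congrArg (fun n : ℕ => (n : ℝ) / (N.choose m))
      (congrArg Finset.card (Finset.filter_congr_decidable ..))
  have hcm : ∀ S ∈ s, (S ∩ A).card ≤ m := by
    intro S hS
    rw [hs, mem_powersetCard] at hS
    exact le_trans (Finset.card_le_card inter_subset_left) (le_of_eq hS.2)
  have key : ∀ j : ℕ,
      ((PMF.uniformOfFinset s hne).toOuterMeasure {S | (S ∩ A).card ≤ j}).toReal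
        ≤ ∑ l ∈ Finset.range (j + 1),
            ((K'.choose l * (N - K').choose (m - l) : ℝ) / (N.choose m)) := by
    intro j
    rw [hmeas (fun S => (S ∩ A).card ≤ j)]
    have h1 : ((s.filter (fun S => (S ∩ A).card ≤ min j m)).card : ℝ)
        ≤ ((∑ l ∈ range (min j m + 1), K'.choose l * (N - K').choose (m - l) : ℕ) : ℝ) := by
      have hc := count_le U A hAU m (min j m)
      rw [hN, hK] at hc
      have hmono := tail_mono N m (min j m) K' (min_le_right j m) K hsel hKN
      exact_mod_cast le_trans hc hmono
    have h2 : ((∑ l ∈ range (min j m + 1), K'.choose l * (N - K').choose (m - l) : ℕ) : ℝ)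
        ≤ ∑ l ∈ range (j + 1), ((K'.choose l : ℝ) * ((N - K').choose (m - l) : ℝ)) := by
      push_cast
      refine Finset.sum_le_sum_of_subset_of_nonneg (range_subset_range.mpr (by omega)) ?_
      intro i _ _
      positivity
    rw [← Finset.sum_div]
    gcongr
    refine le_trans ?_ (le_trans h1 h2)
    refine Nat.cast_le.mpr (Finset.card_le_card ?_)
    intro x hx
    have hx' := Finset.mem_filter.mp hx
    have hxj : (x ∩ A).card ≤ j := hx'.2
    exact Finset.mem_filter.mpr ⟨hx'.1, le_min hxj (hcm x hx'.1)⟩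
  refine ⟨key, ?_⟩
  intro δi hδ
  rw [hmeas (fun S => (∑ l ∈ Finset.range ((S ∩ A).card + 1),
    ((K'.choose l * (N - K').choose (m - l) : ℝ) / (N.choose m))) ≤ δi)]
  rcases Finset.eq_empty_or_nonempty
      (s.filter (fun S => (∑ l ∈ Finset.range ((S ∩ A).card + 1),
        ((K'.choose l * (N - K').choose (m - l) : ℝ) / (N.choose m))) ≤ δi)) with hTe | hTne
  · rw [hTe]; simpa using hδ
  · obtain ⟨S₀, hS₀, hmax⟩ := Finset.exists_max_image _ (fun S => (S ∩ A).card) hTne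
    rw [mem_filter] at hS₀
    have hstep := key (S₀ ∩ A).card
    rw [hmeas (fun S => (S ∩ A).card ≤ (S₀ ∩ A).card)] at hstep
    have hsub : s.filter (fun S => (∑ l ∈ Finset.range ((S ∩ A).card + 1),
          ((K'.choose l * (N - K').choose (m - l) : ℝ) / (N.choose m))) ≤ δi)
        ⊆ s.filter (fun S => (S ∩ A).card ≤ (S₀ ∩ A).card) := by
      intro x hx
      have hx' := Finset.mem_filter.mp hx
      exact Finset.mem_filter.mpr ⟨hx'.1, hmax x hx⟩
    refine le_trans ?_ (le_trans hstep hS₀.2)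
    exact (div_le_div_iff_of_pos_right hCR).mpr (Nat.cast_le.mpr (Finset.card_le_card hsub))
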